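/- Let A be a finite alphabet and p ≥ 1 a natural number. Let s_1, …, s_p, t_1, …, t_p, and w be words over A such that w = s_1 t_1 = s_2 t_2 = ⋯ = s_p t_p. Suppose there are two words s and t over A with |s| ≥ |w| and |t| ≥ |w| such that for every 1 ≤ i ≤ p, s_i is a suffix of s and t_i is a prefix of t. Then there exists a set of words B over A such that (1) B has cardinality at most 3, and (2) for every 1 ≤ i ≤ p, both s_i and t_i are concatenations of elements of B (i.e., s_i, t_i ∈ B*). -/

import Mathlib

/-- `InStar B w` means that the word `w` belongs to `B*`, i.e. `w` is a
(finite, possibly empty) concatenation of elements of the set of words `B`. -/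
def InStar {A : Type*} (B : Finset (List A)) (w : List A) : Prop :=
  ∃ l : List (List A), (∀ u ∈ l, u ∈ B) ∧ l.flatten = w


/-- pointwise periodicity of a function on `[0, N)`. -/
def PerF {α : Type*} (f : ℕ → α) (N c : ℕ) : Prop := ∀ a, a + c < N → f (a + c) = f a

lemma perF_mono {α : Type*} {f : ℕ → α} {N N' c : ℕ} (h : N' ≤ N) (hp : PerF f N c) :
    PerF f N' c := fun a ha => hp a (lt_of_lt_of_le ha h)

lemma perF_of_dvd {α : Type*} {f : ℕ → α} {N c d : ℕ} (h : PerF f N c) (hd : c ∣ d) :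
    PerF f N d := by
  obtain ⟨e, rfl⟩ := hd
  induction e with
  | zero => intro a ha; simp
  | succ e ih =>
    intro a ha
    have h1 : (a + c * e) + c < N := by rw [Nat.mul_succ] at ha; omega
    have h2 := h (a + c * e) h1
    have h3 : a + c * (e + 1) = (a + c * e) + c := by ring
    rw [h3, h2, ih a (by omega)]

lemma perF_extend {α : Type*} {f : ℕ → α} {N q g : ℕ} (hq : 0 < q) (hN : 2 * q + g ≤ N)
    (h1 : PerF f N q) (h2 : PerF f (N - q) g) : PerF f N g := by
  intro j
  induction j using Nat.strong_induction_on with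
  | _ j ih =>
    intro hj
    by_cases hcase : j + g < N - q
    · exact h2 j hcase
    · have hjq : q ≤ j := by omega
      have e1 : f ((j - q) + q) = f (j - q) := h1 (j - q) (by omega)
      have e2 : f ((j - q + g) + q) = f (j - q + g) := h1 (j - q + g) (by omega)
      have e3 : (j - q) + q = j := by omega
      have e4 : (j - q + g) + q = j + g := by omega
      rw [e3] at e1
      rw [e4] at e2
      rw [e2, e1]
      exact ih (j - q) (by omega) (by omega)

lemma perF_fw_aux {α : Type*} {f : ℕ → α} :
    ∀ (M q r N : ℕ), q + r ≤ M → q ≤ r → PerF f N q → PerF f N r → q + r ≤ N →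
      PerF f N (Nat.gcd q r) := by
  intro M
  induction M with
  | zero =>
    intro q r N hM _ _ _ _
    have hq : q = 0 := by omega
    have hr : r = 0 := by omega
    subst hq; subst hr
    intro a _; simp
  | succ M ih =>
    intro q r N hM hle hq hr hN
    rcases Nat.eq_zero_or_pos q with h0 | hqpos
    · subst h0; simpa using hr
    rcases eq_or_lt_of_le hle with heq | hlt'
    · subst heq; simpa [Nat.gcd_self] using hq
    -- 0 < q < r
    have hg : Nat.gcd q (r - q) = Nat.gcd q r := by
      conv_rhs => rw [← Nat.sub_add_cancel (le_of_lt hlt')]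
      rw [Nat.gcd_add_self_right]
    have h1 : PerF f (N - q) q := perF_mono (by omega) hq
    have h2 : PerF f (N - q) (r - q) := by
      intro a ha
      have e1 : f ((a + (r - q)) + q) = f (a + (r - q)) := hq (a + (r - q)) (by omega)
      have e2 : (a + (r - q)) + q = a + r := by omega
      rw [e2] at e1
      rw [← e1, hr a (by omega)]
    have h3 : PerF f (N - q) (Nat.gcd q r) := by
      rw [← hg]
      rcases le_total q (r - q) with hc | hc
      · exact ih q (r - q) (N - q) (by omega) hc h1 h2 (by omega)
      · rw [Nat.gcd_comm]
        exact ih (r - q) q (N - q) (by omega) hc h2 h1 (by omega)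
    have hgpos : 0 < Nat.gcd q r := Nat.gcd_pos_of_pos_left r hqpos
    have hgdvd : Nat.gcd q r ∣ r - q :=
      Nat.dvd_sub (Nat.gcd_dvd_right q r) (Nat.gcd_dvd_left q r)
    have hgle : Nat.gcd q r ≤ r - q := Nat.le_of_dvd (by omega) hgdvd
    exact perF_extend hqpos (by omega) hq h3

lemma perF_fw {α : Type*} {f : ℕ → α} {q r N : ℕ} (hq : PerF f N q) (hr : PerF f N r)
    (hN : q + r ≤ N) : PerF f N (Nat.gcd q r) := by
  rcases le_total q r with h | h
  · exact perF_fw_aux (q + r) q r N le_rfl h hq hr hN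
  · rw [Nat.gcd_comm]
    exact perF_fw_aux (q + r) r q N (by omega) h hr hq (by omega)

/-- periodicity of a list. -/
def PerL {A : Type*} (w : List A) (c : ℕ) : Prop := PerF (fun j => w[j]?) w.length c

lemma perL_of_eq {A : Type*} {w : List A} {c : ℕ}
    (h : w.drop c = w.take (w.length - c)) : PerL w c := by
  intro a ha
  show w[a + c]? = w[a]?
  have h1 : w[a + c]? = (w.drop c)[a]? := by rw [List.getElem?_drop]; congr 1; omega
  rw [h1, h, List.getElem?_take, if_pos (by omega)]

lemma eq_of_perL {A : Type*} {w : List A} {c : ℕ} (hc : c ≤ w.length) (h : PerL w c) :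
    w.drop c = w.take (w.length - c) := by
  apply List.ext_getElem?
  intro a
  rw [List.getElem?_drop, List.getElem?_take]
  by_cases ha : a < w.length - c
  · rw [if_pos ha]
    have := h a (by omega)
    simpa [Nat.add_comm] using this
  · rw [if_neg ha, List.getElem?_eq_none (by omega)]

lemma perL_drop {A : Type*} {w : List A} {c k : ℕ} (h : PerL w c) : PerL (w.drop k) c := by
  intro a ha
  rw [List.length_drop] at ha
  show (w.drop k)[a + c]? = (w.drop k)[a]?
  rw [List.getElem?_drop, List.getElem?_drop]
  have e : k + (a + c) = (k + a) + c := by omega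
  rw [e]
  exact h (k + a) (by omega)

lemma take_eq_flatten_replicate {A : Type*} {w : List A} {c : ℕ} (h : PerL w c) :
    ∀ e, e * c ≤ w.length → (List.replicate e (w.take c)).flatten = w.take (e * c) := by
  intro e
  induction e with
  | zero => intro _; simp
  | succ e ih =>
    intro he
    have hc : c ≤ w.length := by
      have : 1 * c ≤ (e + 1) * c := Nat.mul_le_mul_right c (by omega)
      omega
    have hee : e * c ≤ w.length - c := by
      have : (e + 1) * c = e * c + c := by ring
      omega
    have key : (w.drop c).take (e * c) = w.take (e * c) := by
      rw [eq_of_perL hc h, List.take_take, inf_eq_left.mpr hee]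
    have : (e + 1) * c = c + e * c := by ring
    rw [this, List.take_add, List.replicate_succ, List.flatten_cons, key, ih (by omega)]

lemma take_drop_shift {A : Type*} {w : List A} {d k L : ℕ} (h : PerL w d)
    (hL : k + d + L ≤ w.length) :
    (w.drop (k + d)).take L = (w.drop k).take L := by
  apply List.ext_getElem?
  intro a
  rw [List.getElem?_take, List.getElem?_take]
  by_cases ha : a < L
  · rw [if_pos ha, if_pos ha, List.getElem?_drop, List.getElem?_drop]
    have e : k + d + a = (k + a) + d := by omega
    rw [e]
    exact h (k + a) (by omega)
  · rw [if_neg ha, if_neg ha]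

lemma dvd_le_half {b m : ℕ} (hb : b ∣ m) (hne : b ≠ m) (hm : 0 < m) : 2 * b ≤ m := by
  obtain ⟨t, rfl⟩ := hb
  match t with
  | 0 => omega
  | 1 => omega
  | (t + 2) => nlinarith

/-- Let `A` be a finite alphabet and `p ≥ 1`. Let `s 1, …, s p, t 1, …, t p`
and `w` be words over `A` with `w = s i ++ t i` for every `i`. Suppose there
are words `S` and `T` with `|S| ≥ |w|` and `|T| ≥ |w|` such that every `s i`
is a suffix of `S` and every `t i` is a prefix of `T`. Then there is a set of
words `B` of cardinality at most `3` such that every `s i` and every `t i`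
is a concatenation of elements of `B`. -/
theorem exists_generating_set_card_le_three {A : Type*} [Fintype A]
    (p : ℕ) (hp : 1 ≤ p) (s t : Fin p → List A) (w S T : List A)
    (hw : ∀ i, w = s i ++ t i)
    (hS : w.length ≤ S.length) (hT : w.length ≤ T.length)
    (hsuf : ∀ i, (s i).IsSuffix S) (hpre : ∀ i, (t i).IsPrefix T) :
    ∃ B : Finset (List A), B.card ≤ 3 ∧
      ∀ i, InStar B (s i) ∧ InStar B (t i) := by
  classical
  have hk : ∀ i, s i = w.take (s i).length ∧ t i = w.drop (s i).length := by
    intro i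
    refine ⟨?_, ?_⟩
    · rw [hw i, List.take_left]
    · rw [hw i, List.drop_left]
  have hlen : ∀ i, (s i).length + (t i).length = w.length := by
    intro i; rw [hw i, List.length_append]
  -- pairwise periods
  have pair : ∀ i j, (s i).length ≤ (s j).length →
      PerL w ((s j).length - (s i).length) := by
    intro i j hij
    obtain ⟨c, hc⟩ := List.suffix_of_suffix_length_le (hsuf i) (hsuf j) hij
    have htl : (t j).length ≤ (t i).length := by
      have h1 := hlen i; have h2 := hlen j; omega
    obtain ⟨e, he⟩ := List.prefix_of_prefix_length_le (hpre j) (hpre i) htl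
    have hw1 : w = c ++ (s i ++ t j) := by
      rw [hw j, ← hc, List.append_assoc]
    have hw2 : w = (s i ++ t j) ++ e := by
      rw [hw i, ← he, List.append_assoc]
    have hclen : c.length = (s j).length - (s i).length := by
      have : c.length + (s i).length = (s j).length := by
        rw [← hc, List.length_append]
      omega
    apply perL_of_eq
    have hmidlen : (s i ++ t j).length = w.length - ((s j).length - (s i).length) := by
      rw [List.length_append]
      have h1 := hlen i; have h2 := hlen j; omega
    have hd : w.drop ((s j).length - (s i).length) = s i ++ t j := by
      conv_lhs => rw [← hclen, hw1]
      exact List.drop_left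
    have ht' : w.take (w.length - ((s j).length - (s i).length)) = s i ++ t j := by
      conv_lhs => rw [← hmidlen, hw2]
      exact List.take_left
    rw [hd, ht']
  have hne : (Finset.univ : Finset (Fin p)).Nonempty := ⟨⟨0, hp⟩, Finset.mem_univ _⟩
  obtain ⟨i0, -, hi0'⟩ := Finset.exists_min_image Finset.univ (fun i => (s i).length) hne
  obtain ⟨i1, -, hi1'⟩ := Finset.exists_max_image Finset.univ (fun i => (s i).length) hne
  have hi0 : ∀ i, (s i0).length ≤ (s i).length := fun i => hi0' i (Finset.mem_univ i)
  have hi1 : ∀ i, (s i).length ≤ (s i1).length := fun i => hi1' i (Finset.mem_univ i)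
  set k := (s i0).length with hkdef
  set K := (s i1).length with hKdef
  have hKn : K ≤ w.length := by have := hlen i1; omega
  by_cases hm0 : K - k = 0
  · -- all s i have the same length
    refine ⟨{w.take k, w.drop k}, ?_, ?_⟩
    · exact le_trans (Finset.card_insert_le _ _) (by simp)
    · intro i
      have hksi : (s i).length = k := by
        have h1 := hi0 i; have h2 := hi1 i; omega
      have hsi : s i = w.take k := by rw [(hk i).1, hksi]
      have hti : t i = w.drop k := by rw [(hk i).2, hksi]
      constructor
      · exact ⟨[w.take k], by intro u hu; simp at hu; simp [hu], by simp [hsi]⟩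
      · exact ⟨[w.drop k], by intro u hu; simp at hu; simp [hu], by simp [hti]⟩
  · set m := K - k with hmdef
    have hm : 0 < m := by omega
    have hmn : m ≤ w.length := by omega
    have perb : ∀ i, PerL w (Nat.gcd ((s i).length - k) m) := by
      intro i
      have h1 : PerL w ((s i).length - k) := pair i0 i (hi0 i)
      have h2 : PerL w (K - (s i).length) := pair i i1 (hi1 i)
      have hgeq : Nat.gcd ((s i).length - k) (K - (s i).length)
          = Nat.gcd ((s i).length - k) m := by
        have e1 : m = (K - (s i).length) + ((s i).length - k) := by
          have h3 := hi0 i; have h4 := hi1 i; omega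
        rw [e1, Nat.gcd_add_self_right]
      have h5 := perF_fw h1 h2 (by have h3 := hi0 i; have h4 := hi1 i; omega)
      rwa [hgeq] at h5
    have fold : ∀ u : Finset (Fin p), ∃ g, 0 < g ∧ g ∣ m ∧ PerL w g ∧
        ∀ i ∈ u, g ∣ ((s i).length - k) := by
      intro u
      induction u using Finset.induction_on with
      | empty =>
        refine ⟨m, hm, dvd_rfl, ?_, by simp⟩
        have := pair i0 i1 (hi0 i1)
        exact this
      | @insert i u hiu ih =>
        obtain ⟨g, hg0, hgm, hgper, hgdvd⟩ := ih
        set b := Nat.gcd ((s i).length - k) m with hbdef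
        have hb0 : 0 < b := Nat.gcd_pos_of_pos_right _ hm
        have hbm : b ∣ m := Nat.gcd_dvd_right _ _
        have hbper : PerL w b := perb i
        have hper : PerL w (Nat.gcd b g) := by
          by_cases hbm' : b = m
          · have e : Nat.gcd b g = g := by rw [hbm']; exact Nat.gcd_eq_right hgm
            rwa [e]
          by_cases hgm' : g = m
          · have e : Nat.gcd b g = b := by rw [hgm']; exact Nat.gcd_eq_left hbm
            rwa [e]
          · have h2b := dvd_le_half hbm hbm' hm
            have h2g := dvd_le_half hgm hgm' hm
            exact perF_fw hbper hgper (by omega)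
        refine ⟨Nat.gcd b g, Nat.gcd_pos_of_pos_left _ hb0,
          (Nat.gcd_dvd_right b g).trans hgm, hper, ?_⟩
        intro j hj
        rcases Finset.mem_insert.mp hj with h | h
        · subst h
          exact (Nat.gcd_dvd_left b g).trans (Nat.gcd_dvd_left _ _)
        · exact (Nat.gcd_dvd_right b g).trans (hgdvd j h)
    obtain ⟨g, hg0, hgm, hgper, hgdvd⟩ := fold Finset.univ
    have hgdvd' : ∀ i, g ∣ ((s i).length - k) := fun i => hgdvd i (Finset.mem_univ i)
    set ρ := (w.drop k).take g with hρdef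
    have hperg' : PerL (w.drop k) g := perL_drop hgper
    have hrep : ∀ L, g ∣ L → L ≤ m →
        (w.drop k).take L = (List.replicate (L / g) ρ).flatten := by
      intro L hLg hLm
      have he : L / g * g = L := Nat.div_mul_cancel hLg
      have hle : L / g * g ≤ (w.drop k).length := by
        rw [he, List.length_drop]; omega
      rw [hρdef, take_eq_flatten_replicate hperg' (L / g) hle, he]
    refine ⟨{w.take k, ρ, w.drop K}, ?_, ?_⟩
    · refine le_trans (Finset.card_insert_le _ _) ?_
      have h2 : ({ρ, w.drop K} : Finset (List A)).card ≤ 2 :=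
        le_trans (Finset.card_insert_le _ _) (by simp)
      omega
    · intro i
      set d := (s i).length - k with hddef
      have hkd : (s i).length = k + d := by have := hi0 i; omega
      have hdm : d ≤ m := by have := hi1 i; omega
      constructor
      · refine ⟨w.take k :: List.replicate (d / g) ρ, ?_, ?_⟩
        · intro u hu
          rcases List.mem_cons.mp hu with h | h
          · simp [h]
          · rw [List.eq_of_mem_replicate h]; simp
        · rw [List.flatten_cons, ← hrep d (hgdvd' i) hdm, ← List.take_add]
          conv_rhs => rw [(hk i).1, hkd]
      · refine ⟨List.replicate ((m - d) / g) ρ ++ [w.drop K], ?_, ?_⟩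
        · intro u hu
          rcases List.mem_append.mp hu with h | h
          · rw [List.eq_of_mem_replicate h]; simp
          · simp at h; simp [h]
        · rw [List.flatten_append]
          simp only [List.flatten_cons, List.flatten_nil, List.append_nil]
          rw [← hrep (m - d) (Nat.dvd_sub hgm (hgdvd' i)) (by omega)]
          have hsh : (w.drop (k + d)).take (m - d) = (w.drop k).take (m - d) :=
            take_drop_shift (perF_of_dvd hgper (hgdvd' i)) (by omega)
          rw [← hsh]
          have hKd : w.drop K = (w.drop (k + d)).drop (m - d) := by
            rw [List.drop_drop]; congr 1; omega
          rw [hKd, List.take_append_drop]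
          conv_rhs => rw [(hk i).2, hkd]
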